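/- Let 2 < β < 3 + √3, set η₁ = (β² − 6β + 6)/(2 − β), a = (β² − 5β + 8)/(2(2 − β)), b = 3 − β, c = (β² − 7β + 8)/(2(2 − β)). Let f₀, f₁ : (0,1) → ℝ be differentiable. Then the pair (f₀, f₁) satisfies the system ξ(ξ−1)f₀'(ξ) + (3−β)ξ f₀(ξ) − 2ξ f₁(ξ) = 0 and 2ξ(ξ−1)f₁'(ξ) − (η₁ + 1 + (η₁ − 7 + 2β)ξ)f₁(ξ) + (η₁ − 3)f₀(ξ) = 0 for all ξ ∈ (0,1) if and only if f₀ is twice differentiable on (0,1), f₁(ξ) = ((ξ−1)f₀'(ξ) + (3−β)f₀(ξ))/2 for all ξ ∈ (0,1), and f₀ satisfies the hypergeometric equation ξ(ξ−1)f₀''(ξ) + ((a+b+1)ξ − c)f₀'(ξ) + a b f₀(ξ) = 0 on (0,1). -/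
import Mathlib


open Set

lemma deriv_f1_eq (f₀ f₁ : ℝ → ℝ) (β : ℝ) (ξ : ℝ) (hξ : ξ ∈ Ioo (0:ℝ) 1)
    (hf₀ : DifferentiableAt ℝ f₀ ξ)
    (hdd : DifferentiableAt ℝ (deriv f₀) ξ)
    (heq : ∀ x ∈ Ioo (0:ℝ) 1, f₁ x = ((x - 1) * deriv f₀ x + (3 - β) * f₀ x) / 2) :
    deriv f₁ ξ = ((ξ - 1) * deriv (deriv f₀) ξ + (4 - β) * deriv f₀ ξ) / 2 := by
  have hnh : Ioo (0:ℝ) 1 ∈ nhds ξ := isOpen_Ioo.mem_nhds hξ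
  have hev : f₁ =ᶠ[nhds ξ] fun x => ((x - 1) * deriv f₀ x + (3 - β) * f₀ x) / 2 :=
    Filter.eventuallyEq_of_mem hnh heq
  rw [hev.deriv_eq]
  have h : HasDerivAt (fun x => ((x - 1) * deriv f₀ x + (3 - β) * f₀ x) / 2)
      ((1 * deriv f₀ ξ + (ξ - 1) * deriv (deriv f₀) ξ + (3 - β) * deriv f₀ ξ) / 2) ξ := by
    exact ((((hasDerivAt_id ξ).sub_const 1).mul hdd.hasDerivAt).add
      ((hf₀.hasDerivAt).const_mul (3 - β))).div_const 2
  rw [h.deriv]; ring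

/-- For `2 < β < 3 + √3`, with `η₁ = (β² - 6β + 6)/(2 - β)`,
`a = (β² - 5β + 8)/(2(2 - β))`, `b = 3 - β`, `c = (β² - 7β + 8)/(2(2 - β))`, a pair
`(f₀, f₁)` of functions differentiable on `(0,1)` satisfies the first-order system
`ξ(ξ-1)f₀' + (3-β)ξ f₀ - 2ξ f₁ = 0`,
`2ξ(ξ-1)f₁' - (η₁ + 1 + (η₁ - 7 + 2β)ξ) f₁ + (η₁ - 3) f₀ = 0` on `(0,1)`
if and only if `f₀` is twice differentiable on `(0,1)`,
`f₁ = ((ξ-1)f₀' + (3-β)f₀)/2`, and `f₀` satisfies the hypergeometric equation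
`ξ(ξ-1)f₀'' + ((a+b+1)ξ - c)f₀' + ab f₀ = 0` on `(0,1)`. -/
theorem N2_system_iff_hypergeometric (β η₁ a b c : ℝ)
    (hβ : 2 < β) (hβ' : β < 3 + Real.sqrt 3)
    (hη₁ : η₁ = (β ^ 2 - 6 * β + 6) / (2 - β))
    (ha : a = (β ^ 2 - 5 * β + 8) / (2 * (2 - β)))
    (hb : b = 3 - β)
    (hc : c = (β ^ 2 - 7 * β + 8) / (2 * (2 - β)))
    (f₀ f₁ : ℝ → ℝ)
    (hf₀ : ∀ ξ ∈ Set.Ioo (0 : ℝ) 1, DifferentiableAt ℝ f₀ ξ)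
    (hf₁ : ∀ ξ ∈ Set.Ioo (0 : ℝ) 1, DifferentiableAt ℝ f₁ ξ) :
    (∀ ξ ∈ Set.Ioo (0 : ℝ) 1,
        ξ * (ξ - 1) * deriv f₀ ξ + (3 - β) * ξ * f₀ ξ - 2 * ξ * f₁ ξ = 0 ∧
        2 * ξ * (ξ - 1) * deriv f₁ ξ
          - (η₁ + 1 + (η₁ - 7 + 2 * β) * ξ) * f₁ ξ + (η₁ - 3) * f₀ ξ = 0)
    ↔
    ((∀ ξ ∈ Set.Ioo (0 : ℝ) 1, DifferentiableAt ℝ (deriv f₀) ξ) ∧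
     (∀ ξ ∈ Set.Ioo (0 : ℝ) 1,
        f₁ ξ = ((ξ - 1) * deriv f₀ ξ + (3 - β) * f₀ ξ) / 2) ∧
     (∀ ξ ∈ Set.Ioo (0 : ℝ) 1,
        ξ * (ξ - 1) * deriv (deriv f₀) ξ
          + ((a + b + 1) * ξ - c) * deriv f₀ ξ + a * b * f₀ ξ = 0)) := by
  have h2β : (2 : ℝ) - β ≠ 0 := by intro h; nlinarith
  have hη' : η₁ * (2 - β) = β ^ 2 - 6 * β + 6 := by
    rw [hη₁]; field_simp
  have ha' : a * (2 * (2 - β)) = β ^ 2 - 5 * β + 8 := by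
    rw [ha]; field_simp
  have hc' : c * (2 * (2 - β)) = β ^ 2 - 7 * β + 8 := by
    rw [hc]; field_simp
  constructor
  · intro hsys
    have hf1eq : ∀ ξ ∈ Ioo (0:ℝ) 1,
        f₁ ξ = ((ξ - 1) * deriv f₀ ξ + (3 - β) * f₀ ξ) / 2 := by
      intro ξ hξ
      obtain ⟨h1, _⟩ := hsys ξ hξ
      have hξ0 : ξ ≠ 0 := ne_of_gt hξ.1
      have key : ξ * (((ξ - 1) * deriv f₀ ξ + (3 - β) * f₀ ξ) / 2 - f₁ ξ) = 0 := by
        linear_combination h1 / 2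
      have := (mul_eq_zero.mp key).resolve_left hξ0
      linarith
    have hdd : ∀ ξ ∈ Ioo (0:ℝ) 1, DifferentiableAt ℝ (deriv f₀) ξ := by
      intro ξ hξ
      have hξ1 : ξ - 1 ≠ 0 := by have := hξ.2; intro h; linarith [sub_eq_zero.mp h]
      have hg : DifferentiableAt ℝ (fun x => (2 * f₁ x - (3 - β) * f₀ x) / (x - 1)) ξ :=
        (((hf₁ ξ hξ).const_mul 2).sub ((hf₀ ξ hξ).const_mul (3 - β))).div
          (differentiableAt_id.sub_const 1) hξ1
      refine hg.congr_of_eventuallyEq ?_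
      refine Filter.eventuallyEq_of_mem (isOpen_Ioo.mem_nhds hξ) ?_
      intro x hx
      have hx1 : x - 1 ≠ 0 := by have := hx.2; intro h; linarith [sub_eq_zero.mp h]
      have := hf1eq x hx
      field_simp
      linarith [this]
    refine ⟨hdd, hf1eq, ?_⟩
    intro ξ hξ
    have hξ1 : ξ - 1 ≠ 0 := by have := hξ.2; intro h; linarith [sub_eq_zero.mp h]
    obtain ⟨_, h2⟩ := hsys ξ hξ
    rw [deriv_f1_eq f₀ f₁ β ξ hξ (hf₀ ξ hξ) (hdd ξ hξ) hf1eq, hf1eq ξ hξ] at h2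
    set D := deriv f₀ ξ
    set D2 := deriv (deriv f₀) ξ
    set F := f₀ ξ
    have key : (2 - β) * ((ξ - 1) * (ξ * (ξ - 1) * D2 + ((a + b + 1) * ξ - c) * D
        + a * b * F)) = 0 := by
      linear_combination (2 - β) * h2 + ((1 + ξ) * ((ξ - 1) * D + (3 - β) * F) / 2 - F) * hη'
        + ((ξ - 1) * ξ * D / 2 + b * F * (ξ - 1) / 2) * ha'
        + (-(ξ - 1) * D / 2) * hc'
        + ((2 - β) * ξ * (ξ - 1) * D + F * (ξ - 1) * (β ^ 2 - 5 * β + 8) / 2) * hb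
    have k1 := (mul_eq_zero.mp key).resolve_left h2β
    exact (mul_eq_zero.mp k1).resolve_left hξ1
  · rintro ⟨hdd, hf1eq, hhyp⟩
    intro ξ hξ
    have hξ1 : ξ - 1 ≠ 0 := by have := hξ.2; intro h; linarith [sub_eq_zero.mp h]
    constructor
    · rw [hf1eq ξ hξ]; ring
    · rw [deriv_f1_eq f₀ f₁ β ξ hξ (hf₀ ξ hξ) (hdd ξ hξ) hf1eq, hf1eq ξ hξ]
      set D := deriv f₀ ξ
      set D2 := deriv (deriv f₀) ξ
      set F := f₀ ξ
      have hh := hhyp ξ hξ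
      have key : (2 - β) * (2 * ξ * (ξ - 1) * (((ξ - 1) * D2 + (4 - β) * D) / 2)
          - (η₁ + 1 + (η₁ - 7 + 2 * β) * ξ) * (((ξ - 1) * D + (3 - β) * F) / 2)
          + (η₁ - 3) * F) = 0 := by
        linear_combination (2 - β) * (ξ - 1) * hh
          - ((1 + ξ) * ((ξ - 1) * D + (3 - β) * F) / 2 - F) * hη'
          - ((ξ - 1) * ξ * D / 2 + b * F * (ξ - 1) / 2) * ha'
          - (-(ξ - 1) * D / 2) * hc'
          - ((2 - β) * ξ * (ξ - 1) * D + F * (ξ - 1) * (β ^ 2 - 5 * β + 8) / 2) * hb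
      exact (mul_eq_zero.mp key).resolve_left h2β
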